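/- Let f be a monic polynomial of degree n ≥ 2 over K all of whose roots z satisfy |z| ≤ 1. Then the derivative f' has at least one root w with |w| ≤ |n|^{-1/(n-1)}. -/
import Mathlib

private lemma multiset_prod_le_one' {s : Multiset ℝ} (h0 : ∀ x ∈ s, 0 ≤ x)
    (h1 : ∀ x ∈ s, x ≤ 1) : s.prod ≤ 1 := by
  induction s using Multiset.induction with
  | empty => simp
  | cons a t ih =>
    simp only [Multiset.prod_cons]
    have ha0 : 0 ≤ a := h0 a (Multiset.mem_cons_self a t)
    have ha1 : a ≤ 1 := h1 a (Multiset.mem_cons_self a t)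
    have ht : t.prod ≤ 1 := ih (fun x hx => h0 x (Multiset.mem_cons_of_mem hx))
      (fun x hx => h1 x (Multiset.mem_cons_of_mem hx))
    have ht0 : 0 ≤ t.prod := Multiset.prod_nonneg
      (fun x hx => h0 x (Multiset.mem_cons_of_mem hx))
    calc a * t.prod ≤ 1 * 1 := mul_le_mul ha1 ht ht0 zero_le_one
    _ = 1 := by ring

private lemma pow_card_le_multiset_prod' {s : Multiset ℝ} {a : ℝ} (ha : 0 ≤ a)
    (h : ∀ x ∈ s, a ≤ x) : a ^ (Multiset.card s) ≤ s.prod := by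
  induction s using Multiset.induction with
  | empty => simp
  | cons b t ih =>
    simp only [Multiset.prod_cons, Multiset.card_cons, pow_succ, mul_comm]
    have hb : a ≤ b := h b (Multiset.mem_cons_self b t)
    have ht : a ^ (Multiset.card t) ≤ t.prod := ih
      (fun x hx => h x (Multiset.mem_cons_of_mem hx))
    exact mul_le_mul hb ht (pow_nonneg ha _) (le_trans ha hb)

private lemma multiset_sum_v_le {K : Type*} [Field K] (v : AbsoluteValue K ℝ)
    (hna : IsNonarchimedean v) {s : Multiset K} (h : ∀ x ∈ s, v x ≤ 1) :
    v s.sum ≤ 1 := by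
  induction s using Multiset.induction with
  | empty => simp
  | cons a t ih =>
    simp only [Multiset.sum_cons]
    refine le_trans (hna a t.sum) (max_le (h a (Multiset.mem_cons_self a t)) ?_)
    exact ih (fun x hx => h x (Multiset.mem_cons_of_mem hx))

private lemma multiset_exists_min {K : Type*} [Field K] (v : AbsoluteValue K ℝ)
    {s : Multiset K} (hs : s ≠ 0) : ∃ w ∈ s, ∀ x ∈ s, v w ≤ v x := by
  induction s using Multiset.induction with
  | empty => exact absurd rfl hs
  | cons a t ih =>
    rcases eq_or_ne t 0 with rfl | ht
    · exact ⟨a, Multiset.mem_cons_self a 0, by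
        intro x hx
        rw [Multiset.mem_cons] at hx
        rcases hx with rfl | hx
        · exact le_refl _
        · simp at hx⟩
    · obtain ⟨w, hw, hwmin⟩ := ih ht
      rcases le_total (v a) (v w) with hle | hle
      · refine ⟨a, Multiset.mem_cons_self a t, ?_⟩
        intro x hx
        rw [Multiset.mem_cons] at hx
        rcases hx with rfl | hx
        · exact le_refl _
        · exact le_trans hle (hwmin x hx)
      · refine ⟨w, Multiset.mem_cons_of_mem hw, ?_⟩
        intro x hx
        rw [Multiset.mem_cons] at hx
        rcases hx with rfl | hx
        · exact hle
        · exact hwmin x hx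

/-- For a monic polynomial of degree `n ≥ 2` over an algebraically closed non-archimedean
field with all roots in the closed unit disk, the derivative has a root `w` with
`|w| ≤ |n|^{-1/(n-1)}`. -/
theorem derivative_has_small_root {K : Type*} [Field K] [IsAlgClosed K] [CharZero K]
    (v : AbsoluteValue K ℝ) (hna : IsNonarchimedean v)
    (n : ℕ) (hn : 2 ≤ n) (f : Polynomial K) (hmonic : f.Monic)
    (hdeg : f.natDegree = n) (hroots : ∀ z : K, f.IsRoot z → v z ≤ 1) :
    ∃ w : K, (Polynomial.derivative f).IsRoot w ∧
      v w ≤ v ((n : K)) ^ (-(1 / ((n : ℝ) - 1))) := by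
  classical
  set g := Polynomial.derivative f with hg
  have hn0K : (n : K) ≠ 0 := Nat.cast_ne_zero.mpr (by omega)
  have hvn : 0 < v (n : K) := v.pos hn0K
  have hf0 : f ≠ 0 := hmonic.ne_zero
  -- g has natDegree n-1 and leading coefficient n
  have hcoeffg : g.coeff (n - 1) = (n : K) := by
    rw [hg, Polynomial.coeff_derivative]
    have h1 : n - 1 + 1 = n := by omega
    rw [h1]
    have : f.coeff n = 1 := by
      have := hmonic.coeff_natDegree
      rwa [hdeg] at this
    rw [this, one_mul, Nat.cast_sub (by omega : 1 ≤ n)]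
    push_cast
    ring
  have hgle : g.natDegree ≤ n - 1 := by
    have := Polynomial.natDegree_derivative_le f
    rwa [hdeg] at this
  have hgdeg : g.natDegree = n - 1 :=
    Polynomial.natDegree_eq_of_le_of_coeff_ne_zero hgle (hcoeffg ▸ hn0K)
  have hgne : g ≠ 0 := fun h => hn0K (by rw [← hcoeffg, h, Polynomial.coeff_zero])
  have hglead : g.leadingCoeff = (n : K) := by
    rw [Polynomial.leadingCoeff, hgdeg, hcoeffg]
  -- root counts
  have hcardg : Multiset.card g.roots = n - 1 := by
    rw [Polynomial.splits_iff_card_roots.mp (IsAlgClosed.splits g), hgdeg]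
  have hcardf : Multiset.card f.roots = n := by
    rw [Polynomial.splits_iff_card_roots.mp (IsAlgClosed.splits f), hdeg]
  -- v (f.coeff 1) ≤ 1 via Vieta
  have hvcoeff1 : v (f.coeff 1) ≤ 1 := by
    have hc : f.coeff 1 = f.leadingCoeff * (-1) ^ (f.natDegree - 1) *
        f.roots.esymm (f.natDegree - 1) :=
      Polynomial.coeff_eq_esymm_roots_of_card (by rw [hcardf, hdeg]) (by omega)
    rw [hc, hmonic.leadingCoeff, one_mul, v.map_mul, v.map_pow, v.map_neg, v.map_one,
      one_pow, one_mul]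
    refine multiset_sum_v_le v hna ?_
    intro x hx
    rw [Multiset.mem_map] at hx
    obtain ⟨t, ht, rfl⟩ := hx
    rw [Multiset.mem_powersetCard] at ht
    rw [map_multiset_prod]
    refine multiset_prod_le_one' ?_ ?_
    · intro y hy
      rw [Multiset.mem_map] at hy
      obtain ⟨z, _, rfl⟩ := hy
      exact v.nonneg z
    · intro y hy
      rw [Multiset.mem_map] at hy
      obtain ⟨z, hz, rfl⟩ := hy
      have hzf : z ∈ f.roots := Multiset.mem_of_le ht.1 hz
      exact hroots z ((Polynomial.mem_roots hf0).mp hzf)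
  -- g.coeff 0 = f.coeff 1
  have hg0 : g.coeff 0 = f.coeff 1 := by
    rw [hg, Polynomial.coeff_derivative]
    push_cast
    ring
  -- factor g and evaluate at 0
  have hfact := Polynomial.C_leadingCoeff_mul_prod_multiset_X_sub_C
    (p := g) (by rw [hcardg, hgdeg])
  have heval : v (g.coeff 0) = v (n : K) * (g.roots.map v).prod := by
    have h0 : g.coeff 0 = (n : K) * (g.roots.map fun a => Polynomial.eval 0
        (Polynomial.X - Polynomial.C a)).prod := by
      rw [Polynomial.coeff_zero_eq_eval_zero]
      conv_lhs => rw [← hfact]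
      rw [Polynomial.eval_mul, Polynomial.eval_C, hglead, Polynomial.eval_multiset_prod,
        Multiset.map_map]
      rfl
    rw [h0, v.map_mul]
    congr 1
    rw [map_multiset_prod, Multiset.map_map]
    refine congrArg Multiset.prod (Multiset.map_congr rfl ?_)
    intro x _
    simp
  -- product of v over roots of g is ≤ (v n)⁻¹
  have hprodle : (g.roots.map v).prod ≤ 1 / v (n : K) := by
    rw [le_div_iff₀ hvn]
    calc (g.roots.map v).prod * v (n : K) = v (n : K) * (g.roots.map v).prod := mul_comm _ _
      _ = v (g.coeff 0) := heval.symm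
      _ = v (f.coeff 1) := by rw [hg0]
      _ ≤ 1 := hvcoeff1
  -- pick a root of minimal absolute value
  have hne : g.roots ≠ 0 := by
    intro h
    rw [h] at hcardg
    simp at hcardg
    omega
  obtain ⟨w, hw, hwmin⟩ := multiset_exists_min v hne
  have hwroot : g.IsRoot w := (Polynomial.mem_roots hgne).mp hw
  have hpow : (v w) ^ (n - 1) ≤ 1 / v (n : K) := by
    refine le_trans ?_ hprodle
    have := pow_card_le_multiset_prod' (v.nonneg w) (s := g.roots.map v) ?_
    · rwa [Multiset.card_map, hcardg] at this
    · intro x hx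
      rw [Multiset.mem_map] at hx
      obtain ⟨z, hz, rfl⟩ := hx
      exact hwmin z hz
  -- conclude via rpow manipulations
  refine ⟨w, hwroot, ?_⟩
  have hm : (0 : ℝ) < (n : ℝ) - 1 := by
    have : (2 : ℝ) ≤ (n : ℝ) := by exact_mod_cast hn
    linarith
  rw [← Real.rpow_le_rpow_iff (v.nonneg w)
    (Real.rpow_nonneg hvn.le _) hm]
  have hcast : ((n - 1 : ℕ) : ℝ) = (n : ℝ) - 1 := by
    have : 1 ≤ n := by omega
    push_cast [this]
    ring
  have hleft : v w ^ ((n : ℝ) - 1) = v w ^ (n - 1 : ℕ) := by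
    rw [← hcast, Real.rpow_natCast]
  have hright : (v ((n : K)) ^ (-(1 / ((n : ℝ) - 1)))) ^ ((n : ℝ) - 1)
      = (v ((n : K)))⁻¹ := by
    rw [← Real.rpow_mul hvn.le]
    have hexp : -(1 / ((n : ℝ) - 1)) * ((n : ℝ) - 1) = -1 := by
      field_simp
    rw [hexp, Real.rpow_neg_one]
  rw [hleft, hright, ← one_div]
  exact hpow
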